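/- The set D consisting of the five vectors (1, 0, 0), (−1/2, √3/2, 0), (−1/2, −√3/2, 0), (0, 0, 1), (0, 0, −1) in ℝ³ is a positive basis of unit vectors of ℝ³ of size 5 belonging to Ω, and cm(D) ≥ cm(D') for every positive basis D' of unit vectors of ℝ³ of size 5 belonging to Ω; that is, D is optimal over Ω. -/

import Mathlib

noncomputable section

open Matrix
open scoped InnerProductSpace

/-- `ℝ^n` as a Euclidean space. -/
abbrev Euc (n : ℕ) := EuclideanSpace ℝ (Fin n)

/-- The positive span of a set of vectors: all nonnegative linear combinations. -/
def pspan {n : ℕ} (S : Set (Euc n)) : Set (Euc n) :=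
  {v | ∃ (t : Finset (Euc n)) (c : Euc n → ℝ),
      ↑t ⊆ S ∧ (∀ d ∈ t, 0 ≤ c d) ∧ v = ∑ d ∈ t, c d • d}

/-- A finite set is positively independent if no element lies in the positive span
of the others. -/
def PosIndep {n : ℕ} (S : Finset (Euc n)) : Prop :=
  ∀ d ∈ S, d ∉ pspan ((↑S : Set (Euc n)) \ {d})

/-- A positive basis of `ℝ^n`: a positively independent finite set of nonzero vectors
whose positive span is `ℝ^n`. -/
def IsPosBasis {n : ℕ} (S : Finset (Euc n)) : Prop :=
  (∀ d ∈ S, d ≠ 0) ∧ PosIndep S ∧ pspan (↑S : Set (Euc n)) = Set.univ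

/-- A positive basis of unit vectors of `ℝ^n`. -/
def IsUnitPosBasis {n : ℕ} (S : Finset (Euc n)) : Prop :=
  (∀ d ∈ S, ‖d‖ = 1) ∧ PosIndep S ∧ pspan (↑S : Set (Euc n)) = Set.univ

/-- The cosine measure of a finite set of nonzero vectors. -/
def cm {n : ℕ} (S : Finset (Euc n)) : ℝ :=
  sInf {r : ℝ | ∃ u : Euc n, ‖u‖ = 1 ∧
    r = sSup ((fun d => ⟪u, d⟫_ℝ / ‖d‖) '' (↑S : Set (Euc n)))}

/-- The cosine vector set: unit vectors attaining the minimum defining `cm`. -/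
def cV {n : ℕ} (S : Finset (Euc n)) : Set (Euc n) :=
  {u | ‖u‖ = 1 ∧ sSup ((fun d => ⟪u, d⟫_ℝ / ‖d‖) '' (↑S : Set (Euc n))) = cm S}

/-- The active set of vectors of `S` on `u`. -/
def activeSet {n : ℕ} (u : Euc n) (S : Finset (Euc n)) : Set (Euc n) :=
  {d | d ∈ S ∧ ⟪d, u⟫_ℝ = cm S}

/-- The all activity set. -/
def allActivity {n : ℕ} (S : Finset (Euc n)) : Set (Euc n) :=
  ⋃ u ∈ cV S, activeSet u S

/-- A minimal positive basis of a subspace `L` of `ℝ^n`: a positively independent set of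
`dim L + 1` unit vectors of `L` whose positive span is `L`. -/
def IsMinPosBasisOf {n : ℕ} (L : Submodule ℝ (Euc n)) (S : Finset (Euc n)) : Prop :=
  (∀ d ∈ S, ‖d‖ = 1) ∧ (↑S : Set (Euc n)) ⊆ (L : Set (Euc n)) ∧ PosIndep S ∧
    pspan (↑S : Set (Euc n)) = (L : Set (Euc n)) ∧ S.card = Module.finrank ℝ L + 1

/-- `D` is partitioned into `s - n` minimal positive bases `P i` of subspaces `L i`
whose (internal) direct sum is `ℝ^n`. -/
def IsOmegaPartition {n s : ℕ} (D : Finset (Euc n))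
    (L : Fin (s - n) → Submodule ℝ (Euc n)) (P : Fin (s - n) → Finset (Euc n)) : Prop :=
  (∀ i, 1 ≤ Module.finrank ℝ (L i)) ∧
  (∀ i, IsMinPosBasisOf (L i) (P i)) ∧
  (∀ i j, i ≠ j → Disjoint (↑(P i) : Set (Euc n)) (↑(P j) : Set (Euc n))) ∧
  ((↑D : Set (Euc n)) = ⋃ i, (↑(P i) : Set (Euc n))) ∧
  DirectSum.IsInternal L

/-- Membership in the set `Ω` of positive bases of size `s`. -/
def MemOmega {n : ℕ} (s : ℕ) (D : Finset (Euc n)) : Prop :=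
  ∃ (L : Fin (s - n) → Submodule ℝ (Euc n)) (P : Fin (s - n) → Finset (Euc n)),
    IsOmegaPartition D L P

/-- Membership in the set `Ω⁺`: an `Ω`-partition with pairwise orthogonal subspaces. -/
def MemOmegaPlus {n : ℕ} (s : ℕ) (D : Finset (Euc n)) : Prop :=
  ∃ (L : Fin (s - n) → Submodule ℝ (Euc n)) (P : Fin (s - n) → Finset (Euc n)),
    IsOmegaPartition D L P ∧ ∀ i j, i ≠ j → ∀ x ∈ L i, ∀ y ∈ L j, ⟪x, y⟫_ℝ = 0

/-- Reinterpret a plain vector as an element of Euclidean space. -/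
def toEuc {n : ℕ} (v : Fin n → ℝ) : Euc n := WithLp.toLp 2 v

/-- The `j`-th column of a matrix, as a vector of `ℝ^n`. -/
def col {n m : ℕ} (B : Matrix (Fin n) (Fin m) ℝ) (j : Fin m) : Euc n := toEuc fun i => B i j

/-- The Gram matrix `G(B) = Bᵀ B` of the columns of `B`. -/
def gram {n : ℕ} {ι : Type} [Fintype ι] (B : Matrix (Fin n) ι ℝ) : Matrix ι ι ℝ := Bᵀ * B

/-- The grand sum `1ᵀ G 1` of a square matrix. -/
def grandSum {ι : Type} [Fintype ι] (G : Matrix ι ι ℝ) : ℝ :=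
  (fun _ => (1 : ℝ)) ⬝ᵥ (G *ᵥ fun _ => (1 : ℝ))


/-! ### Auxiliary machinery for the proof -/

section Aux

open Module

-- basic real facts
lemma sqrt5_pos : (0:ℝ) < Real.sqrt 5 := Real.sqrt_pos.mpr (by norm_num)
lemma sqrt5_sq : Real.sqrt 5 * Real.sqrt 5 = 5 := Real.mul_self_sqrt (by norm_num)
lemma a5sq : (1/Real.sqrt 5) * (1/Real.sqrt 5) = 1/5 := by
  rw [div_mul_div_comm, one_mul, sqrt5_sq]
lemma two_div_sqrt5_le_one : (2 / Real.sqrt 5 : ℝ) ≤ 1 := by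
  rw [div_le_one sqrt5_pos]
  nlinarith [sqrt5_sq, sqrt5_pos]
lemma hs3 : Real.sqrt 3 * Real.sqrt 3 = 3 := Real.mul_self_sqrt (by norm_num)
lemma hs3pos : (0:ℝ) < Real.sqrt 3 := Real.sqrt_pos.mpr (by norm_num)
lemma hs3ge1 : (1:ℝ) ≤ Real.sqrt 3 := by nlinarith [hs3, hs3pos]

lemma key1' (B N : ℝ) (hB : 0 ≤ B) (hN : 0 ≤ N) (hN1 : N ≤ 1) :
    ∃ s, 0 ≤ s ∧ s ≤ 2/Real.sqrt 5 ∧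
      |s*B - Real.sqrt (1-s^2)*N| ≤ 1/Real.sqrt 5 := by
  have h5 := sqrt5_pos
  have hsq := sqrt5_sq
  have hf0 : (0:ℝ) * B - Real.sqrt (1 - 0^2) * N = -N := by norm_num
  have hval : Real.sqrt (1 - (2/Real.sqrt 5)^2) = 1/Real.sqrt 5 := by
    have : (1 : ℝ) - (2/Real.sqrt 5)^2 = (1/Real.sqrt 5)^2 := by
      field_simp
      nlinarith [hsq]
    rw [this, Real.sqrt_sq (by positivity)]
  by_cases h1 : N ≤ 1/Real.sqrt 5
  · refine ⟨0, le_refl _, by positivity, ?_⟩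
    rw [hf0, abs_neg, abs_of_nonneg hN]; exact h1
  · push_neg at h1
    by_cases h2 : 2/Real.sqrt 5*B - Real.sqrt (1-(2/Real.sqrt 5)^2)*N ≤ 1/Real.sqrt 5
    · refine ⟨2/Real.sqrt 5, by positivity, le_refl _, ?_⟩
      rw [hval] at h2
      rw [abs_le, hval]
      refine ⟨?_, h2⟩
      have h3 : (0:ℝ) ≤ 2/Real.sqrt 5 * B := by positivity
      have hb2 : 1/Real.sqrt 5 * N ≤ 1/Real.sqrt 5 := by
        nlinarith [one_div_pos.mpr h5]
      linarith
    · push_neg at h2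
      have hcont : ContinuousOn (fun s : ℝ => s*B - Real.sqrt (1-s^2)*N)
          (Set.Icc 0 (2/Real.sqrt 5)) := by
        apply Continuous.continuousOn
        continuity
      have h0le : (0:ℝ) ≤ 2/Real.sqrt 5 := by positivity
      have hIVT := intermediate_value_Icc h0le hcont
      have hmem : (1/Real.sqrt 5 : ℝ) ∈ Set.Icc ((0:ℝ)*B - Real.sqrt (1-0^2)*N)
          ((2/Real.sqrt 5)*B - Real.sqrt (1-(2/Real.sqrt 5)^2)*N) := by
        rw [Set.mem_Icc, hf0]
        constructor
        · have : (0:ℝ) ≤ 1/Real.sqrt 5 := by positivity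
          linarith
        · exact le_of_lt h2
      obtain ⟨s, hs, hfs⟩ := hIVT hmem
      have hfs' : s * B - Real.sqrt (1-s^2) * N = 1/Real.sqrt 5 := hfs
      exact ⟨s, hs.1, hs.2, by rw [hfs', abs_of_nonneg (by positivity)]⟩

lemma key1 (β ν : ℝ) (hν : ν^2 ≤ 1) :
    ∃ s t : ℝ, 0 ≤ s ∧ s ≤ 2/Real.sqrt 5 ∧ s^2 + t^2 = 1 ∧
      |s*β + t*ν| ≤ 1/Real.sqrt 5 := by
  have hN1 : |ν| ≤ 1 := by
    rw [← sq_abs] at hν; nlinarith [abs_nonneg ν]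
  obtain ⟨s, hs0, hs1, hkey⟩ := key1' |β| |ν| (abs_nonneg _) (abs_nonneg _) hN1
  have hs1' : s ≤ 1 := le_trans hs1 two_div_sqrt5_le_one
  have hsle : s^2 ≤ 1 := by nlinarith
  set τ := Real.sqrt (1 - s^2) with hτ
  have hτ0 : 0 ≤ τ := Real.sqrt_nonneg _
  have hτsq : s^2 + τ^2 = 1 := by
    rw [hτ, Real.sq_sqrt (by linarith)]; ring
  rcases le_or_gt 0 β with hβ | hβ <;> rcases le_or_gt 0 ν with hν' | hν'
  · refine ⟨s, -τ, hs0, hs1, by rw [neg_sq]; exact hτsq, ?_⟩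
    have : s*β + (-τ)*ν = s*|β| - τ*|ν| := by
      rw [abs_of_nonneg hβ, abs_of_nonneg hν']; ring
    rw [this]; exact hkey
  · refine ⟨s, τ, hs0, hs1, hτsq, ?_⟩
    have : s*β + τ*ν = s*|β| - τ*|ν| := by
      rw [abs_of_nonneg hβ, abs_of_neg hν']; ring
    rw [this]; exact hkey
  · refine ⟨s, τ, hs0, hs1, hτsq, ?_⟩
    have : s*β + τ*ν = -(s*|β| - τ*|ν|) := by
      rw [abs_of_neg hβ, abs_of_nonneg hν']; ring
    rw [this, abs_neg]; exact hkey
  · refine ⟨s, -τ, hs0, hs1, by rw [neg_sq]; exact hτsq, ?_⟩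
    have : s*β + (-τ)*ν = -(s*|β| - τ*|ν|) := by
      rw [abs_of_neg hβ, abs_of_neg hν']; ring
    rw [this, abs_neg]; exact hkey

lemma inner_self_one {d : Euc 3} (h : ‖d‖ = 1) : ⟪d, d⟫_ℝ = 1 := by
  rw [real_inner_self_eq_norm_mul_norm, h]; norm_num

section Planar
variable (d1 d2 d3 : Euc 3)

lemma expand_zero (u1 : ‖d1‖ = 1) (u2 : ‖d2‖ = 1) (u3 : ‖d3‖ = 1)
    (a b c : ℝ) (hsum : a•d1 + b•d2 + c•d3 = 0) :
    a^2 + b^2 + c^2 + 2*a*b*⟪d1,d2⟫_ℝ + 2*a*c*⟪d1,d3⟫_ℝ + 2*b*c*⟪d2,d3⟫_ℝ = 0 := by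
  have h0 : ⟪a•d1+b•d2+c•d3, a•d1+b•d2+c•d3⟫_ℝ = 0 := by rw [hsum]; simp
  simp only [inner_add_left, inner_add_right, real_inner_smul_left,
    real_inner_smul_right, inner_self_one u1, inner_self_one u2, inner_self_one u3] at h0
  rw [real_inner_comm d1 d2, real_inner_comm d1 d3, real_inner_comm d2 d3] at h0
  linear_combination h0

lemma step1 (u1 : ‖d1‖ = 1) (u2 : ‖d2‖ = 1) (u3 : ‖d3‖ = 1)
    (a b c : ℝ) (ha : 1 ≤ a) (hb : 0 ≤ b) (hc : 0 ≤ c)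
    (hsum : a•d1 + b•d2 + c•d3 = 0)
    (hx : -(1/2) < ⟪d1,d2⟫_ℝ) (hy : -(1/2) < ⟪d1,d3⟫_ℝ) (hz : -(1/2) < ⟪d2,d3⟫_ℝ) :
    False := by
  have E := expand_zero d1 d2 d3 u1 u2 u3 a b c hsum
  set x := ⟪d1,d2⟫_ℝ; set y := ⟪d1,d3⟫_ℝ; set z := ⟪d2,d3⟫_ℝ
  have ha0 : (0:ℝ) < a := by linarith
  rcases eq_or_lt_of_le hb with hb0 | hb0
  · rcases eq_or_lt_of_le hc with hc0 | hc0
    · subst hb0; subst hc0; nlinarith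
    · subst hb0; nlinarith [mul_pos ha0 hc0, sq_nonneg (a - c),
        mul_pos (mul_pos ha0 hc0) (by linarith : (0:ℝ) < y + 1/2)]
  · nlinarith [mul_pos ha0 hb0, mul_pos (mul_pos ha0 hb0) (by linarith : (0:ℝ) < x + 1/2),
      mul_nonneg (mul_nonneg ha0.le hc) (by linarith : (0:ℝ) ≤ y + 1/2),
      mul_nonneg (mul_nonneg hb0.le hc) (by linarith : (0:ℝ) ≤ z + 1/2),
      sq_nonneg (a-b), sq_nonneg (a-c), sq_nonneg (b-c)]

lemma planar_core (u1 : ‖d1‖ = 1) (u2 : ‖d2‖ = 1) (u3 : ‖d3‖ = 1)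
    (h31 : d3 ≠ d1) (h32 : d3 ≠ d2) (hc12 : ⟪d1,d2⟫_ℝ ≤ -(1/2))
    (a b c : ℝ) (ha : 0 ≤ a) (hb : 0 ≤ b) (hc : 1 ≤ c)
    (hsum : a•d1 + b•d2 + c•d3 = 0) :
    ∃ w : Euc 3, ‖w‖ = 1 ∧ (∃ x y z : ℝ, w = x•d1 + y•d2 + z•d3) ∧
      ⟪w,d1⟫_ℝ ≤ 1/2 ∧ ⟪w,d2⟫_ℝ ≤ 1/2 ∧ ⟪w,d3⟫_ℝ ≤ 1/2 := by
  have hd11 := inner_self_one u1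
  have hd22 := inner_self_one u2
  have hd33 := inner_self_one u3
  have hCS : |⟪d1,d2⟫_ℝ| ≤ 1 := by
    have := abs_real_inner_le_norm d1 d2; rwa [u1, u2, mul_one] at this
  have hge : -1 ≤ ⟪d1,d2⟫_ℝ := by
    have := abs_le.mp hCS; linarith [this.1]
  have hpsq : ‖d1 + d2‖^2 = 2 + 2*⟪d1,d2⟫_ℝ := by
    rw [norm_add_sq_real, u1, u2]; ring
  rcases eq_or_lt_of_le hge with heq | hlt
  · -- ⟪d1,d2⟫ = -1, so d2 = -d1
    have hp0 : d1 + d2 = 0 := by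
      have h2 : ‖d1 + d2‖ = 0 :=
        pow_eq_zero_iff two_ne_zero |>.mp (by rw [hpsq, ← heq]; ring)
      exact norm_eq_zero.mp h2
    have hd2 : d2 = -d1 := eq_neg_of_add_eq_zero_right hp0
    set t := ⟪d3,d1⟫_ℝ with htdef
    set q := d3 - t • d1 with hqdef
    have hqsq : ‖q‖^2 = 1 - t^2 := by
      rw [hqdef, norm_sub_sq_real, real_inner_smul_right, norm_smul, u1, u3,
        Real.norm_eq_abs, ← htdef, mul_one, sq_abs]
      ring
    have hq0 : q ≠ 0 := by
      intro h0
      have hd3 : d3 = t • d1 := by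
        rw [hqdef, sub_eq_zero] at h0; exact h0
      have : |t| = 1 := by
        have := congrArg norm hd3
        rw [norm_smul, u1, u3, Real.norm_eq_abs, mul_one] at this
        exact this.symm
      rcases abs_eq (by norm_num : (0:ℝ) ≤ 1) |>.mp this with h1 | h1
      · exact h31 (by rw [hd3, h1, one_smul])
      · exact h32 (by rw [hd3, h1, hd2, neg_one_smul])
    have hqpos : 0 < ‖q‖ := norm_pos_iff.mpr hq0
    refine ⟨(-(‖q‖⁻¹)) • q, ?_, ⟨‖q‖⁻¹ * t, 0, -(‖q‖⁻¹), ?_⟩, ?_, ?_, ?_⟩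
    · rw [norm_smul, Real.norm_eq_abs, abs_neg, abs_of_pos (by positivity)]
      exact inv_mul_cancel₀ hqpos.ne'
    · rw [hqdef]; module
    · rw [real_inner_smul_left, hqdef, inner_sub_left, real_inner_smul_left, hd11,
        ← htdef]
      ring_nf
      norm_num
    · rw [hd2, inner_neg_right, real_inner_smul_left, hqdef, inner_sub_left,
        real_inner_smul_left, hd11, ← htdef]
      ring_nf
      norm_num
    · have hq3 : ⟪q,d3⟫_ℝ = 1 - t^2 := by
        rw [hqdef, inner_sub_left, real_inner_smul_left, hd33, real_inner_comm d3 d1, ← htdef]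
        ring
      rw [real_inner_smul_left, hq3, ← hqsq, sq, neg_mul,
        inv_mul_cancel_left₀ hqpos.ne']
      linarith
  · -- -1 < ⟪d1,d2⟫
    set x := ⟪d1,d2⟫_ℝ with hxdef
    have hppos : 0 < ‖d1 + d2‖ := by
      rw [norm_pos_iff]
      intro h0
      have : (2:ℝ) + 2*x = 0 := by rw [← hpsq, h0]; simp
      linarith
    set P := ‖d1 + d2‖
    refine ⟨P⁻¹ • (d1 + d2), ?_, ⟨P⁻¹, P⁻¹, 0, by rw [zero_smul, add_zero, smul_add]⟩, ?_, ?_, ?_⟩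
    · rw [norm_smul, norm_inv, Real.norm_eq_abs, abs_of_pos hppos]
      exact inv_mul_cancel₀ hppos.ne'
    · rw [real_inner_smul_left, inner_add_left, hd11, real_inner_comm d1 d2, ← hxdef]
      rw [inv_mul_le_iff₀ hppos]
      nlinarith [hpsq, hppos, hc12]
    · rw [real_inner_smul_left, inner_add_left, hd22, ← hxdef]
      rw [inv_mul_le_iff₀ hppos]
      nlinarith [hpsq, hppos, hc12]
    · rw [real_inner_smul_left, inner_add_left]
      have hkey : c * (⟪d1,d3⟫_ℝ + ⟪d2,d3⟫_ℝ) = -((a+b)*(1+x)) := by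
        have h3 : c • d3 = -(a•d1 + b•d2) := by
          rw [eq_neg_iff_add_eq_zero]; rw [← hsum]; abel
        have : ⟪d1 + d2, c • d3⟫_ℝ = ⟪d1 + d2, -(a•d1+b•d2)⟫_ℝ := by rw [h3]
        simp only [real_inner_smul_right, inner_add_left, inner_add_right, inner_neg_right,
          real_inner_smul_right, hd11, hd22] at this
        rw [real_inner_comm d1 d2] at this
        rw [← hxdef] at this
        linear_combination this
      have hc0 : (0:ℝ) < c := by linarith
      have hnn : ⟪d1,d3⟫_ℝ + ⟪d2,d3⟫_ℝ ≤ 0 := by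
        have h1x : (0:ℝ) ≤ 1 + x := by linarith
        have : c * (⟪d1,d3⟫_ℝ + ⟪d2,d3⟫_ℝ) ≤ 0 := by
          rw [hkey]; nlinarith [mul_nonneg (by linarith : (0:ℝ) ≤ a + b) h1x]
        nlinarith
      nlinarith [mul_nonneg (inv_nonneg.mpr hppos.le) (neg_nonneg.mpr hnn)]

lemma planar (u1 : ‖d1‖ = 1) (u2 : ‖d2‖ = 1) (u3 : ‖d3‖ = 1)
    (h12 : d1 ≠ d2) (h13 : d1 ≠ d3) (h23 : d2 ≠ d3)
    (H1 : ∃ a b c : ℝ, 1 ≤ a ∧ 0 ≤ b ∧ 0 ≤ c ∧ a•d1 + b•d2 + c•d3 = 0)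
    (H2 : ∃ a b c : ℝ, 0 ≤ a ∧ 1 ≤ b ∧ 0 ≤ c ∧ a•d1 + b•d2 + c•d3 = 0)
    (H3 : ∃ a b c : ℝ, 0 ≤ a ∧ 0 ≤ b ∧ 1 ≤ c ∧ a•d1 + b•d2 + c•d3 = 0) :
    ∃ w : Euc 3, ‖w‖ = 1 ∧ (∃ x y z : ℝ, w = x•d1 + y•d2 + z•d3) ∧
      ⟪w,d1⟫_ℝ ≤ 1/2 ∧ ⟪w,d2⟫_ℝ ≤ 1/2 ∧ ⟪w,d3⟫_ℝ ≤ 1/2 := by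
  by_cases hA : ⟪d1,d2⟫_ℝ ≤ -(1/2)
  · obtain ⟨a, b, c, ha, hb, hc, hsum⟩ := H3
    exact planar_core d1 d2 d3 u1 u2 u3 (Ne.symm h13) (Ne.symm h23) hA a b c ha hb hc hsum
  by_cases hB : ⟪d1,d3⟫_ℝ ≤ -(1/2)
  · obtain ⟨a, b, c, ha, hb, hc, hsum⟩ := H2
    obtain ⟨w, hw, ⟨x, y, z, hxyz⟩, w1, w3, w2⟩ :=
      planar_core d1 d3 d2 u1 u3 u2 (Ne.symm h12) h23 hB a c b ha hc hb
        (by rw [← hsum]; abel)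
    exact ⟨w, hw, ⟨x, z, y, by rw [hxyz]; abel⟩, w1, w2, w3⟩
  by_cases hC : ⟪d2,d3⟫_ℝ ≤ -(1/2)
  · obtain ⟨a, b, c, ha, hb, hc, hsum⟩ := H1
    obtain ⟨w, hw, ⟨x, y, z, hxyz⟩, w2, w3, w1⟩ :=
      planar_core d2 d3 d1 u2 u3 u1 h12 h13 hC b c a hb hc ha
        (by rw [← hsum]; abel)
    exact ⟨w, hw, ⟨z, x, y, by rw [hxyz]; abel⟩, w1, w2, w3⟩
  push_neg at hA hB hC
  obtain ⟨a, b, c, ha, hb, hc, hsum⟩ := H1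
  exact absurd hsum (fun h => step1 d1 d2 d3 u1 u2 u3 a b c ha hb hc h hA hB hC)

end Planar

lemma pspan_three {d1 d2 d3 v : Euc 3} (h12 : d1 ≠ d2) (h13 : d1 ≠ d3) (h23 : d2 ≠ d3)
    (hv : v ∈ pspan ({d1, d2, d3} : Set (Euc 3))) :
    ∃ a b c : ℝ, 0 ≤ a ∧ 0 ≤ b ∧ 0 ≤ c ∧ v = a•d1 + b•d2 + c•d3 := by
  classical
  obtain ⟨t, cf, hsub, hpos, heq⟩ := hv
  have hsub' : t ⊆ ({d1, d2, d3} : Finset (Euc 3)) := by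
    intro x hx
    have := hsub hx
    simp only [Set.mem_insert_iff, Set.mem_singleton_iff] at this
    simp [this]
  refine ⟨if d1 ∈ t then cf d1 else 0, if d2 ∈ t then cf d2 else 0,
    if d3 ∈ t then cf d3 else 0, ?_, ?_, ?_, ?_⟩
  · split_ifs with h; exacts [hpos _ h, le_refl _]
  · split_ifs with h; exacts [hpos _ h, le_refl _]
  · split_ifs with h; exacts [hpos _ h, le_refl _]
  · rw [heq]
    have key : ∑ d ∈ t, cf d • d
        = ∑ d ∈ ({d1, d2, d3} : Finset (Euc 3)), (if d ∈ t then cf d • d else 0) := by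
      rw [Finset.sum_ite_mem, Finset.inter_eq_right.mpr hsub']
    rw [key, Finset.sum_insert (by simp [h12, h13]), Finset.sum_insert (by simp [h23]),
      Finset.sum_singleton]
    have e1 : (if d1 ∈ t then cf d1 • d1 else 0) = (if d1 ∈ t then cf d1 else 0) • d1 := by
      split_ifs <;> simp
    have e2 : (if d2 ∈ t then cf d2 • d2 else 0) = (if d2 ∈ t then cf d2 else 0) • d2 := by
      split_ifs <;> simp
    have e3 : (if d3 ∈ t then cf d3 • d3 else 0) = (if d3 ∈ t then cf d3 else 0) • d3 := by
      split_ifs <;> simp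
    rw [e1, e2, e3, add_assoc]

lemma upper_core (Lp Lq : Submodule ℝ (Euc 3)) (Pp Pq : Finset (Euc 3))
    (hp : IsMinPosBasisOf Lp Pp) (hq : IsMinPosBasisOf Lq Pq)
    (hrp : Module.finrank ℝ Lp = 1) (hrq : Module.finrank ℝ Lq = 2) :
    ∃ u : Euc 3, ‖u‖ = 1 ∧ (∀ d ∈ Pp, ⟪u,d⟫_ℝ ≤ 1/Real.sqrt 5) ∧
      (∀ d ∈ Pq, ⟪u,d⟫_ℝ ≤ 1/Real.sqrt 5) := by
  classical
  obtain ⟨hpu, hpsub, -, hppspan, hpcard⟩ := hp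
  obtain ⟨hqu, hqsub, -, hqpspan, hqcard⟩ := hq
  rw [hrp] at hpcard
  obtain ⟨b1, b2, hb12, hPp⟩ := Finset.card_eq_two.mp hpcard
  have hb1u : ‖b1‖ = 1 := hpu b1 (by simp [hPp])
  have hb2u : ‖b2‖ = 1 := hpu b2 (by simp [hPp])
  have hb10 : b1 ≠ 0 := by intro h; rw [h, norm_zero] at hb1u; norm_num at hb1u
  have hspan : Submodule.span ℝ {b1} = Lp := by
    apply Submodule.eq_of_le_of_finrank_le
    · rw [Submodule.span_le, Set.singleton_subset_iff]
      exact hpsub (by simp [hPp])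
    · rw [hrp, finrank_span_singleton hb10]
  obtain ⟨r, hr⟩ : ∃ r : ℝ, r • b1 = b2 := by
    rw [← Submodule.mem_span_singleton (y := b1), hspan]
    exact hpsub (by simp [hPp])
  have hrabs : |r| = 1 := by
    have := congrArg norm hr
    rw [norm_smul, hb1u, hb2u, Real.norm_eq_abs, mul_one] at this
    exact this
  rw [hrq] at hqcard
  obtain ⟨d1, d2, d3, h12, h13, h23, hPq⟩ := Finset.card_eq_three.mp hqcard
  have hd1u : ‖d1‖ = 1 := hqu d1 (by simp [hPq])
  have hd2u : ‖d2‖ = 1 := hqu d2 (by simp [hPq])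
  have hd3u : ‖d3‖ = 1 := hqu d3 (by simp [hPq])
  have hd1L : d1 ∈ Lq := hqsub (by simp [hPq])
  have hd2L : d2 ∈ Lq := hqsub (by simp [hPq])
  have hd3L : d3 ∈ Lq := hqsub (by simp [hPq])
  have hcoe : (↑Pq : Set (Euc 3)) = {d1, d2, d3} := by rw [hPq]; simp
  have combo : ∀ v : Euc 3, v ∈ Lq →
      ∃ a b c : ℝ, 0 ≤ a ∧ 0 ≤ b ∧ 0 ≤ c ∧ v = a•d1 + b•d2 + c•d3 := by
    intro v hv
    apply pspan_three h12 h13 h23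
    rw [← hcoe, hqpspan]
    exact hv
  have H1 : ∃ a b c : ℝ, 1 ≤ a ∧ 0 ≤ b ∧ 0 ≤ c ∧ a•d1 + b•d2 + c•d3 = 0 := by
    obtain ⟨a, b, c, ha, hb, hc, heq⟩ := combo (-d1) (neg_mem hd1L)
    refine ⟨1 + a, b, c, by linarith, hb, hc, ?_⟩
    have : (1+a)•d1 + b•d2 + c•d3 = d1 + (a•d1 + b•d2 + c•d3) := by module
    rw [this, ← heq]; simp
  have H2 : ∃ a b c : ℝ, 0 ≤ a ∧ 1 ≤ b ∧ 0 ≤ c ∧ a•d1 + b•d2 + c•d3 = 0 := by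
    obtain ⟨a, b, c, ha, hb, hc, heq⟩ := combo (-d2) (neg_mem hd2L)
    refine ⟨a, 1 + b, c, ha, by linarith, hc, ?_⟩
    have : a•d1 + (1+b)•d2 + c•d3 = d2 + (a•d1 + b•d2 + c•d3) := by module
    rw [this, ← heq]; simp
  have H3 : ∃ a b c : ℝ, 0 ≤ a ∧ 0 ≤ b ∧ 1 ≤ c ∧ a•d1 + b•d2 + c•d3 = 0 := by
    obtain ⟨a, b, c, ha, hb, hc, heq⟩ := combo (-d3) (neg_mem hd3L)
    refine ⟨a, b, 1 + c, ha, hb, by linarith, ?_⟩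
    have : a•d1 + b•d2 + (1+c)•d3 = d3 + (a•d1 + b•d2 + c•d3) := by module
    rw [this, ← heq]; simp
  obtain ⟨w, hwu, ⟨x, y, z, hwrep⟩, hw1, hw2, hw3⟩ :=
    planar d1 d2 d3 hd1u hd2u hd3u h12 h13 h23 H1 H2 H3
  have hwL : w ∈ Lq := by
    rw [hwrep]
    exact add_mem (add_mem (Submodule.smul_mem _ _ hd1L) (Submodule.smul_mem _ _ hd2L))
      (Submodule.smul_mem _ _ hd3L)
  have hbot : Lqᗮ ≠ ⊥ := by
    intro h
    have htop := Submodule.orthogonal_eq_bot_iff.mp h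
    rw [htop, finrank_top, finrank_euclideanSpace_fin] at hrq
    norm_num at hrq
  obtain ⟨n0, hn0L, hn00⟩ := Submodule.exists_mem_ne_zero_of_ne_bot hbot
  have hn0pos : 0 < ‖n0‖ := norm_pos_iff.mpr hn00
  set n : Euc 3 := ‖n0‖⁻¹ • n0 with hndef
  have hnu : ‖n‖ = 1 := by
    rw [hndef, norm_smul, Real.norm_eq_abs, abs_of_pos (by positivity)]
    exact inv_mul_cancel₀ hn0pos.ne'
  have hnorth : ∀ v ∈ Lq, ⟪n, v⟫_ℝ = 0 := by
    intro v hv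
    rw [hndef, real_inner_smul_left, real_inner_comm,
      (Submodule.mem_orthogonal Lq n0).mp hn0L v hv, mul_zero]
  have hν2 : (⟪n, b1⟫_ℝ)^2 ≤ 1 := by
    have h := abs_real_inner_le_norm n b1
    rw [hnu, hb1u, mul_one] at h
    rw [← sq_abs]
    nlinarith [abs_nonneg (⟪n, b1⟫_ℝ)]
  obtain ⟨s, t, hs0, hs1, hst, habs⟩ := key1 ⟪w, b1⟫_ℝ ⟪n, b1⟫_ℝ hν2
  set u : Euc 3 := s • w + t • n with hudef
  have hwn : ⟪w, n⟫_ℝ = 0 := by rw [real_inner_comm]; exact hnorth w hwL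
  have huu : ‖u‖^2 = 1 := by
    rw [hudef, norm_add_sq_real, norm_smul, norm_smul, real_inner_smul_left,
      real_inner_smul_right, hwn, Real.norm_eq_abs, Real.norm_eq_abs, hwu, hnu]
    rw [mul_one, mul_one, sq_abs, sq_abs]
    rw [← hst]; ring
  have hun : ‖u‖ = 1 := by
    have h0 : (‖u‖ - 1) * (‖u‖ + 1) = 0 := by linear_combination huu
    rcases mul_eq_zero.mp h0 with h | h
    · linarith
    · linarith [norm_nonneg u]
  have hub1 : ⟪u, b1⟫_ℝ = s * ⟪w, b1⟫_ℝ + t * ⟪n, b1⟫_ℝ := by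
    rw [hudef, inner_add_left, real_inner_smul_left, real_inner_smul_left]
  have hble : |⟪u, b1⟫_ℝ| ≤ 1/Real.sqrt 5 := by rw [hub1]; exact habs
  have hsq5 : s * (1/2) ≤ 1/Real.sqrt 5 := by
    have h3 : s * (1/2) ≤ (2/Real.sqrt 5) * (1/2) := by linarith
    have h2 : (2/Real.sqrt 5) * (1/2) = 1/Real.sqrt 5 := by ring
    rw [h2] at h3
    exact h3
  refine ⟨u, hun, ?_, ?_⟩
  · intro d hd
    rw [hPp] at hd
    simp only [Finset.mem_insert, Finset.mem_singleton] at hd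
    rcases hd with rfl | rfl
    · calc ⟪u, d⟫_ℝ ≤ |⟪u, d⟫_ℝ| := le_abs_self _
        _ ≤ 1/Real.sqrt 5 := hble
    · calc ⟪u, d⟫_ℝ ≤ |⟪u, d⟫_ℝ| := le_abs_self _
        _ = |r| * |⟪u, b1⟫_ℝ| := by rw [← hr, real_inner_smul_right, abs_mul]
        _ = |⟪u, b1⟫_ℝ| := by rw [hrabs, one_mul]
        _ ≤ 1/Real.sqrt 5 := hble
  · intro d hd
    rw [hPq] at hd
    simp only [Finset.mem_insert, Finset.mem_singleton] at hd
    have key : ∀ e : Euc 3, e ∈ Lq → ⟪w, e⟫_ℝ ≤ 1/2 → ⟪u, e⟫_ℝ ≤ 1/Real.sqrt 5 := by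
      intro e heL hwe
      have : ⟪u, e⟫_ℝ = s * ⟪w, e⟫_ℝ + t * ⟪n, e⟫_ℝ := by
        rw [hudef, inner_add_left, real_inner_smul_left, real_inner_smul_left]
      rw [this, hnorth e heL, mul_zero, add_zero]
      calc s * ⟪w, e⟫_ℝ ≤ s * (1/2) := mul_le_mul_of_nonneg_left hwe hs0
        _ ≤ 1/Real.sqrt 5 := hsq5
    rcases hd with rfl | rfl | rfl
    exacts [key _ hd1L hw1, key _ hd2L hw2, key _ hd3L hw3]

lemma upper_u (D' : Finset (Euc 3)) (hcard : D'.card = 5) (hW : MemOmega 5 D') :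
    ∃ u : Euc 3, ‖u‖ = 1 ∧ ∀ d ∈ D', ⟪u,d⟫_ℝ ≤ 1/Real.sqrt 5 := by
  classical
  obtain ⟨L, P, hrank, hmin, hdisj, hunion, -⟩ := hW
  have h01 : (0 : Fin 2) ≠ 1 := by decide
  have hDeq : D' = P 0 ∪ P 1 := by
    apply Finset.coe_injective
    rw [Finset.coe_union, hunion]
    ext x
    simp [Set.mem_iUnion, Fin.exists_fin_two]
  have hdisj' : Disjoint (P 0) (P 1) := Finset.disjoint_coe.mp (hdisj 0 1 h01)
  have hcards : (P 0).card + (P 1).card = 5 := by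
    rw [← Finset.card_union_of_disjoint hdisj', ← hDeq, hcard]
  have hc0 := (hmin 0).2.2.2.2
  have hc1 := (hmin 1).2.2.2.2
  have hr0 := hrank 0
  have hr1 := hrank 1
  have hcases : (Module.finrank ℝ (L 0) = 1 ∧ Module.finrank ℝ (L 1) = 2) ∨
      (Module.finrank ℝ (L 0) = 2 ∧ Module.finrank ℝ (L 1) = 1) := by omega
  have main : ∃ u : Euc 3, ‖u‖ = 1 ∧ (∀ d ∈ P 0, ⟪u,d⟫_ℝ ≤ 1/Real.sqrt 5) ∧
      (∀ d ∈ P 1, ⟪u,d⟫_ℝ ≤ 1/Real.sqrt 5) := by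
    rcases hcases with ⟨e0, e1⟩ | ⟨e0, e1⟩
    · exact upper_core (L 0) (L 1) (P 0) (P 1) (hmin 0) (hmin 1) e0 e1
    · obtain ⟨u, hu, hb, hb'⟩ := upper_core (L 1) (L 0) (P 1) (P 0) (hmin 1) (hmin 0) e1 e0
      exact ⟨u, hu, hb', hb⟩
  obtain ⟨u, hu, hb0, hb1⟩ := main
  refine ⟨u, hu, fun d hd => ?_⟩
  rw [hDeq, Finset.mem_union] at hd
  rcases hd with hd | hd
  exacts [hb0 d hd, hb1 d hd]

lemma cm_le_of_u (D' : Finset (Euc 3)) (hne : D'.Nonempty) (hunit : ∀ d ∈ D', ‖d‖ = 1)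
    (u : Euc 3) (hu : ‖u‖ = 1) (hb : ∀ d ∈ D', ⟪u,d⟫_ℝ ≤ 1/Real.sqrt 5) :
    cm D' ≤ 1/Real.sqrt 5 := by
  obtain ⟨d0, hd0⟩ := hne
  have hbdd : BddBelow {r : ℝ | ∃ u : Euc 3, ‖u‖ = 1 ∧
      r = sSup ((fun d => ⟪u, d⟫_ℝ / ‖d‖) '' (↑D' : Set (Euc 3)))} := by
    refine ⟨-1, ?_⟩
    rintro r ⟨u', hu', rfl⟩
    have himg : (⟪u',d0⟫_ℝ / ‖d0‖) ∈ (fun d => ⟪u',d⟫_ℝ/‖d‖) '' (↑D' : Set (Euc 3)) :=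
      ⟨d0, hd0, rfl⟩
    have hbd : BddAbove ((fun d => ⟪u',d⟫_ℝ/‖d‖) '' (↑D' : Set (Euc 3))) :=
      (D'.finite_toSet.image _).bddAbove
    have hle := le_csSup hbd himg
    have h1 : -1 ≤ ⟪u',d0⟫_ℝ / ‖d0‖ := by
      rw [hunit d0 hd0, div_one]
      have h := abs_real_inner_le_norm u' d0
      rw [hu', hunit d0 hd0, mul_one] at h
      linarith [neg_abs_le (⟪u',d0⟫_ℝ)]
    linarith
  have h1 : cm D' ≤ sSup ((fun d => ⟪u,d⟫_ℝ/‖d‖) '' (↑D' : Set (Euc 3))) :=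
    csInf_le hbdd ⟨u, hu, rfl⟩
  have h2 : sSup ((fun d => ⟪u,d⟫_ℝ/‖d‖) '' (↑D' : Set (Euc 3))) ≤ 1/Real.sqrt 5 := by
    apply Real.sSup_le
    · rintro x ⟨d, hd, rfl⟩
      show ⟪u,d⟫_ℝ / ‖d‖ ≤ 1/Real.sqrt 5
      rw [hunit d hd, div_one]
      exact hb d hd
    · positivity
  linarith

end Aux

/-! ### The explicit optimal basis -/

section Explicit

open Module

def V1 : Euc 3 := toEuc ![1, 0, 0]
def V2 : Euc 3 := toEuc ![-(1/2), Real.sqrt 3 / 2, 0]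
def V3 : Euc 3 := toEuc ![-(1/2), -(Real.sqrt 3 / 2), 0]
def V4 : Euc 3 := toEuc ![0, 0, 1]
def V5 : Euc 3 := toEuc ![0, 0, -1]

lemma inner_eu (u : Euc 3) (a b c : ℝ) :
    ⟪u, toEuc ![a,b,c]⟫_ℝ = u 0 * a + u 1 * b + u 2 * c := by
  simp [toEuc, PiLp.inner_apply, Fin.sum_univ_three]
  ring

lemma inner_ee (a b c a' b' c' : ℝ) :
    ⟪toEuc ![a,b,c], toEuc ![a',b',c']⟫_ℝ = a*a' + b*b' + c*c' := by
  simp [toEuc, PiLp.inner_apply, Fin.sum_univ_three, mul_comm]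

lemma norm_ee (a b c : ℝ) : ‖toEuc ![a,b,c]‖ = Real.sqrt (a^2+b^2+c^2) := by
  simp [toEuc, EuclideanSpace.norm_eq, Fin.sum_univ_three, Real.norm_eq_abs, sq_abs]

lemma normV1 : ‖V1‖ = 1 := by rw [V1, norm_ee]; norm_num
lemma normV2 : ‖V2‖ = 1 := by
  rw [V2, norm_ee]
  rw [show (-(1/2):ℝ)^2 + (Real.sqrt 3/2)^2 + 0^2 = 1 by nlinarith [hs3]]
  exact Real.sqrt_one
lemma normV3 : ‖V3‖ = 1 := by
  rw [V3, norm_ee]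
  rw [show (-(1/2):ℝ)^2 + (-(Real.sqrt 3/2))^2 + 0^2 = 1 by nlinarith [hs3]]
  exact Real.sqrt_one
lemma normV4 : ‖V4‖ = 1 := by rw [V4, norm_ee]; norm_num
lemma normV5 : ‖V5‖ = 1 := by rw [V5, norm_ee]; norm_num

lemma ne12 : V1 ≠ V2 := by
  intro h; have := congrFun (congrArg WithLp.ofLp h) 0; simp [V1, V2, toEuc] at this; norm_num at this
lemma ne13 : V1 ≠ V3 := by
  intro h; have := congrFun (congrArg WithLp.ofLp h) 0; simp [V1, V3, toEuc] at this; norm_num at this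
lemma ne14 : V1 ≠ V4 := by
  intro h; have := congrFun (congrArg WithLp.ofLp h) 0; simp [V1, V4, toEuc] at this
lemma ne15 : V1 ≠ V5 := by
  intro h; have := congrFun (congrArg WithLp.ofLp h) 0; simp [V1, V5, toEuc] at this
lemma ne23 : V2 ≠ V3 := by
  intro h; have := congrFun (congrArg WithLp.ofLp h) 1; simp [V2, V3, toEuc] at this
  nlinarith [hs3pos, this]
lemma ne24 : V2 ≠ V4 := by
  intro h; have := congrFun (congrArg WithLp.ofLp h) 0; simp [V2, V4, toEuc] at this
lemma ne25 : V2 ≠ V5 := by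
  intro h; have := congrFun (congrArg WithLp.ofLp h) 0; simp [V2, V5, toEuc] at this
lemma ne34 : V3 ≠ V4 := by
  intro h; have := congrFun (congrArg WithLp.ofLp h) 0; simp [V3, V4, toEuc] at this
lemma ne35 : V3 ≠ V5 := by
  intro h; have := congrFun (congrArg WithLp.ofLp h) 0; simp [V3, V5, toEuc] at this
lemma ne45 : V4 ≠ V5 := by
  intro h; have := congrFun (congrArg WithLp.ofLp h) 2; simp [V4, V5, toEuc] at this; norm_num at this

lemma innerNP : ∀ p ∈ ({V1,V2,V3,V4,V5} : Set (Euc 3)),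
    ∀ q ∈ ({V1,V2,V3,V4,V5} : Set (Euc 3)), p ≠ q → ⟪p,q⟫_ℝ ≤ 0 := by
  intro p hp q hq hne
  simp only [Set.mem_insert_iff, Set.mem_singleton_iff] at hp hq
  rcases hp with rfl|rfl|rfl|rfl|rfl <;> rcases hq with rfl|rfl|rfl|rfl|rfl <;>
    first
      | exact absurd rfl hne
      | (simp only [V1, V2, V3, V4, V5]; rw [inner_ee]; nlinarith [hs3])

lemma posIndep_aux (S : Finset (Euc 3)) (hu : ∀ d ∈ S, ‖d‖ = 1)
    (h : ∀ d ∈ S, ∀ e ∈ S, d ≠ e → ⟪d,e⟫_ℝ ≤ 0) : PosIndep S := by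
  rintro d hd ⟨t, c, hsub, hpos, heq⟩
  have h1 : ⟪d,d⟫_ℝ = 1 := inner_self_one (hu d hd)
  have h2 : ⟪d, ∑ e ∈ t, c e • e⟫_ℝ = ∑ e ∈ t, c e * ⟪d, e⟫_ℝ := by
    rw [inner_sum]
    exact Finset.sum_congr rfl fun e he => real_inner_smul_right d e (c e)
  have h2' : ⟪d, d⟫_ℝ = ∑ e ∈ t, c e * ⟪d, e⟫_ℝ := by
    rw [← h2, ← heq]
  have h3 : ∑ e ∈ t, c e * ⟪d, e⟫_ℝ ≤ 0 := by
    apply Finset.sum_nonpos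
    intro e he
    have hmem := hsub he
    rw [Set.mem_diff, Set.mem_singleton_iff] at hmem
    have hip : ⟪d,e⟫_ℝ ≤ 0 := h d hd e hmem.1 (fun hde => hmem.2 hde.symm)
    exact mul_nonpos_of_nonneg_of_nonpos (hpos e he) hip
  rw [h1] at h2'
  linarith [h2' ▸ h3]

lemma pspan_le {S : Set (Euc 3)} {M : Submodule ℝ (Euc 3)} (h : S ⊆ M) :
    pspan S ⊆ M := by
  rintro v ⟨t, c, hsub, -, rfl⟩
  exact Submodule.sum_mem _ fun d hd => Submodule.smul_mem _ _ (h (hsub hd))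

lemma euc_ext {u v : Euc 3} (h0 : u 0 = v 0) (h1 : u 1 = v 1) (h2 : u 2 = v 2) :
    u = v := by
  ext i
  fin_cases i <;> assumption

lemma sum123 : V1 + V2 + V3 = 0 := by
  apply euc_ext <;> simp [V1, V2, V3, toEuc, PiLp.add_apply] <;> norm_num

lemma hV3rep : V3 = (-1 : ℝ)•V1 + (-1:ℝ)•V2 := by
  apply euc_ext <;>
    simp [V1, V2, V3, toEuc, PiLp.add_apply, PiLp.smul_apply, smul_eq_mul] <;> norm_num

lemma hV5rep : V5 = -V4 := by
  apply euc_ext <;> simp [V4, V5, toEuc, PiLp.neg_apply]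

lemma V40 : V4 ≠ 0 := fun h => by
  have := congrFun (congrArg WithLp.ofLp h) 2; simp [V4, toEuc] at this

lemma liV12 : LinearIndependent ℝ ![V1, V2] := by
  rw [LinearIndependent.pair_iff]
  intro s t h
  have h0 := congrFun (congrArg WithLp.ofLp h) 0
  have h1 := congrFun (congrArg WithLp.ofLp h) 1
  simp [V1, V2, toEuc, PiLp.add_apply, PiLp.smul_apply, smul_eq_mul] at h0 h1
  subst h1
  exact ⟨by linarith [h0], rfl⟩

lemma frL0 : Module.finrank ℝ (Submodule.span ℝ {V1, V2}) = 2 := by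
  have hr : Set.range ![V1, V2] = {V1, V2} := by
    simp [Matrix.range_cons, Matrix.range_empty, Set.pair_comm]
  rw [← hr, finrank_span_eq_card liV12]
  simp

lemma frL1 : Module.finrank ℝ (Submodule.span ℝ {V4}) = 1 :=
  finrank_span_singleton V40

lemma pspan_P0 : pspan ({V1,V2,V3} : Set (Euc 3)) =
    (Submodule.span ℝ {V1,V2} : Submodule ℝ (Euc 3)) := by
  apply subset_antisymm
  · apply pspan_le
    intro x hx
    rcases hx with rfl | hx
    · exact Submodule.subset_span (by simp)
    rcases hx with rfl | hx
    · exact Submodule.subset_span (by simp)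
    rw [Set.mem_singleton_iff] at hx
    subst hx
    rw [hV3rep]
    exact add_mem (Submodule.smul_mem _ _ (Submodule.subset_span (by simp)))
      (Submodule.smul_mem _ _ (Submodule.subset_span (by simp)))
  · intro v hv
    classical
    obtain ⟨a, b, hab⟩ := Submodule.mem_span_pair.mp hv
    set T := max 0 (max (-a) (-b)) with hT
    have hT0 : (0:ℝ) ≤ T := le_max_left _ _
    have hTa : -a ≤ T := le_trans (le_max_left _ _) (le_max_right _ _)
    have hTb : -b ≤ T := le_trans (le_max_right _ _) (le_max_right _ _)
    refine ⟨{V1,V2,V3}, fun d => if d = V1 then a+T else if d = V2 then b+T else T,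
      by simp, ?_, ?_⟩
    · intro d hd
      dsimp only
      split_ifs <;> linarith
    · dsimp only
      rw [Finset.sum_insert (by simp [ne12, ne13]), Finset.sum_insert (by simp [ne23]),
        Finset.sum_singleton]
      rw [if_pos rfl, if_neg (Ne.symm ne12), if_pos rfl, if_neg (Ne.symm ne13),
        if_neg (Ne.symm ne23)]
      rw [show (a+T)•V1 + ((b+T)•V2 + T•V3) = (a•V1 + b•V2) + T•(V1+V2+V3) by module]
      rw [sum123, smul_zero, add_zero, hab]

lemma pspan_P1 : pspan ({V4,V5} : Set (Euc 3)) =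
    (Submodule.span ℝ {V4} : Submodule ℝ (Euc 3)) := by
  apply subset_antisymm
  · apply pspan_le
    intro x hx
    rcases hx with rfl | hx
    · exact Submodule.subset_span (by simp)
    rw [Set.mem_singleton_iff] at hx
    subst hx
    rw [hV5rep]
    exact neg_mem (Submodule.subset_span (by simp))
  · intro v hv
    classical
    obtain ⟨r, hr⟩ := Submodule.mem_span_singleton.mp hv
    rcases le_or_gt 0 r with h | h
    · exact ⟨{V4}, fun _ => r, by simp, fun d _ => h, by rw [Finset.sum_singleton, hr]⟩
    · refine ⟨{V5}, fun _ => -r, by simp, fun d _ => by show (0:ℝ) ≤ -r; linarith, ?_⟩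
      rw [Finset.sum_singleton, hV5rep, smul_neg, neg_smul, neg_neg, hr]

lemma pspan_D : pspan ({V1,V2,V3,V4,V5} : Set (Euc 3)) = Set.univ := by
  apply Set.eq_univ_of_forall
  intro v
  classical
  set x := v 0 with hx
  set y := v 1 with hy
  set z := v 2 with hz
  set g1 := 2*x/3 + (|x| + |y|) with hg1
  set g2 := -x/3 + y/Real.sqrt 3 + (|x| + |y|) with hg2
  set g3 := -x/3 - y/Real.sqrt 3 + (|x| + |y|) with hg3
  have hy3 : |y / Real.sqrt 3| ≤ |y| := by
    rw [abs_div, abs_of_pos hs3pos]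
    exact div_le_self (abs_nonneg y) hs3ge1
  have hy3' := abs_le.mp hy3
  have hxx := le_abs_self x
  have hxx' := neg_abs_le x
  refine ⟨{V1,V2,V3,V4,V5},
    fun d => if d = V1 then g1 else if d = V2 then g2 else if d = V3 then g3
      else if d = V4 then max z 0 else max (-z) 0, by simp, ?_, ?_⟩
  · intro d hd
    dsimp only
    split_ifs <;> first
      | (rw [hg1]; linarith)
      | (rw [hg2]; linarith)
      | (rw [hg3]; linarith)
      | exact le_max_right _ _
  · dsimp only
    rw [Finset.sum_insert (by simp [ne12, ne13, ne14, ne15]),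
      Finset.sum_insert (by simp [ne23, ne24, ne25]),
      Finset.sum_insert (by simp [ne34, ne35]),
      Finset.sum_insert (by simp [ne45]), Finset.sum_singleton]
    rw [if_pos rfl,
      if_neg (Ne.symm ne12), if_pos rfl,
      if_neg (Ne.symm ne13), if_neg (Ne.symm ne23), if_pos rfl,
      if_neg (Ne.symm ne14), if_neg (Ne.symm ne24), if_neg (Ne.symm ne34), if_pos rfl,
      if_neg (Ne.symm ne15), if_neg (Ne.symm ne25), if_neg (Ne.symm ne35),
      if_neg (Ne.symm ne45)]
    apply euc_ext <;>
      simp only [V1, V2, V3, V4, V5, toEuc, PiLp.add_apply, PiLp.smul_apply, smul_eq_mul,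
        Matrix.cons_val_zero, Matrix.cons_val_one, Matrix.head_cons, Matrix.cons_val_two,
        Matrix.tail_cons, ← hx, ← hy, ← hz]
    · rw [hg1, hg2, hg3]
      have h30 := hs3pos.ne'
      field_simp
      ring
    · rw [hg2, hg3]
      have h30 := hs3pos.ne'
      field_simp
      ring
    · rcases le_total z 0 with h | h
      · rw [max_eq_right h, max_eq_left (by linarith)]
        ring
      · rw [max_eq_left h, max_eq_right (by linarith)]
        ring

lemma LdisjL : Disjoint (Submodule.span ℝ {V1,V2}) (Submodule.span ℝ ({V4} : Set (Euc 3))) := by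
  rw [Submodule.disjoint_def]
  intro w hw0 hw1
  obtain ⟨a, b, hab⟩ := Submodule.mem_span_pair.mp hw0
  obtain ⟨r, hr⟩ := Submodule.mem_span_singleton.mp hw1
  have he := hab.trans hr.symm
  have h0 := congrFun (congrArg WithLp.ofLp he) 0
  have h1 := congrFun (congrArg WithLp.ofLp he) 1
  simp [V1, V2, V4, toEuc, PiLp.add_apply, PiLp.smul_apply, smul_eq_mul] at h0 h1
  have hb : b = 0 := h1
  have ha : a = 0 := by rw [hb] at h0; simpa using h0
  rw [← hab, ha, hb, zero_smul, zero_smul, add_zero]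

lemma Lsup : Submodule.span ℝ {V1,V2} ⊔ Submodule.span ℝ ({V4} : Set (Euc 3)) = ⊤ := by
  rw [eq_top_iff]
  intro v _
  rw [Submodule.mem_sup]
  refine ⟨(v 0 + v 1/Real.sqrt 3)•V1 + (2*(v 1)/Real.sqrt 3)•V2, ?_, (v 2)•V4,
    Submodule.smul_mem _ _ (Submodule.subset_span (by simp)), ?_⟩
  · exact add_mem (Submodule.smul_mem _ _ (Submodule.subset_span (by simp)))
      (Submodule.smul_mem _ _ (Submodule.subset_span (by simp)))
  · apply euc_ext <;>
      simp only [V1, V2, V4, toEuc, PiLp.add_apply, PiLp.smul_apply, smul_eq_mul,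
        Matrix.cons_val_zero, Matrix.cons_val_one, Matrix.head_cons, Matrix.cons_val_two,
        Matrix.tail_cons]
    · have h30 := hs3pos.ne'
      field_simp
      ring
    · have h30 := hs3pos.ne'
      field_simp
      ring
    · ring

lemma planar_max (x y : ℝ) (h : 4/5 ≤ x^2 + y^2) :
    1/Real.sqrt 5 ≤ x ∨ 1/Real.sqrt 5 ≤ -x/2 + Real.sqrt 3/2 * y ∨
      1/Real.sqrt 5 ≤ -x/2 - Real.sqrt 3/2 * y := by
  by_contra hcon
  push_neg at hcon
  obtain ⟨h1, h2, h3⟩ := hcon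
  set a := 1/Real.sqrt 5 with hadef
  have ha : a * a = 1/5 := a5sq
  have ha0 : 0 < a := by rw [hadef]; positivity
  have k1 : 0 < 2*a + x - Real.sqrt 3 * y := by linarith
  have k2 : 0 < 2*a + x + Real.sqrt 3 * y := by linarith
  have k3 : 0 < a - x := by linarith
  have k4 : 0 < x + 2*a := by linarith
  nlinarith [mul_pos k1 k2, mul_pos k4 k3, ha, hs3, h]

lemma normD5 : ∀ d ∈ ({V1,V2,V3,V4,V5} : Set (Euc 3)), ‖d‖ = 1 := by
  intro d hd
  simp only [Set.mem_insert_iff, Set.mem_singleton_iff] at hd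
  rcases hd with rfl|rfl|rfl|rfl|rfl
  exacts [normV1, normV2, normV3, normV4, normV5]

lemma exists_big (u : Euc 3) (hu : ‖u‖ = 1) :
    ∃ d ∈ ({V1,V2,V3,V4,V5} : Set (Euc 3)), 1/Real.sqrt 5 ≤ ⟪u, d⟫_ℝ := by
  have hsum : (u 0)^2 + (u 1)^2 + (u 2)^2 = 1 := by
    have h := hu
    rw [EuclideanSpace.norm_eq] at h
    have := Real.sqrt_eq_one.mp h
    simpa [Fin.sum_univ_three, Real.norm_eq_abs, sq_abs] using this
  by_cases h4 : 1/Real.sqrt 5 ≤ u 2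
  · refine ⟨V4, by simp, ?_⟩
    rw [V4, inner_eu]
    linarith
  by_cases h5 : 1/Real.sqrt 5 ≤ -(u 2)
  · refine ⟨V5, by simp, ?_⟩
    rw [V5, inner_eu]
    linarith
  push_neg at h4 h5
  have hz2 : (u 2)^2 ≤ 1/5 := by
    nlinarith [a5sq, sqrt5_pos]
  have hxy : 4/5 ≤ (u 0)^2 + (u 1)^2 := by linarith
  rcases planar_max (u 0) (u 1) hxy with hc | hc | hc
  · refine ⟨V1, by simp, ?_⟩
    rw [V1, inner_eu]
    linarith
  · refine ⟨V2, by simp, ?_⟩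
    rw [V2, inner_eu]
    have : u 0 * (-(1/2)) + u 1 * (Real.sqrt 3/2) + u 2 * 0
        = -(u 0)/2 + Real.sqrt 3/2 * (u 1) := by ring
    rw [this]
    exact hc
  · refine ⟨V3, by simp, ?_⟩
    rw [V3, inner_eu]
    have : u 0 * (-(1/2)) + u 1 * (-(Real.sqrt 3/2)) + u 2 * 0
        = -(u 0)/2 - Real.sqrt 3/2 * (u 1) := by ring
    rw [this]
    exact hc

lemma cm_ge (D : Finset (Euc 3)) (hD : (↑D : Set (Euc 3)) = {V1,V2,V3,V4,V5}) :
    1/Real.sqrt 5 ≤ cm D := by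
  apply le_csInf
  · exact ⟨_, V4, normV4, rfl⟩
  · rintro r ⟨u, hu, rfl⟩
    obtain ⟨d, hd, hbig⟩ := exists_big u hu
    have hdD : d ∈ (↑D : Set (Euc 3)) := by rw [hD]; exact hd
    have hdunit : ‖d‖ = 1 := normD5 d hd
    have hmem : ⟪u,d⟫_ℝ/‖d‖ ∈ (fun d => ⟪u, d⟫_ℝ / ‖d‖) '' (↑D : Set (Euc 3)) :=
      ⟨d, hdD, rfl⟩
    have hle := le_csSup ((D.finite_toSet.image _).bddAbove) hmem
    rw [hdunit, div_one] at hle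
    linarith

end Explicit

/-- the set `{(1,0,0), (-1/2, √3/2, 0), (-1/2, -√3/2, 0), (0,0,1), (0,0,-1)}` is
a positive basis of unit vectors of `ℝ³` of size 5 belonging to `Ω`, and it is optimal over
`Ω`. -/
theorem optimal_basis_R3_size5 (D : Finset (Euc 3))
    (hDdef : (↑D : Set (Euc 3)) =
      {toEuc ![1, 0, 0], toEuc ![-(1/2), Real.sqrt 3 / 2, 0],
        toEuc ![-(1/2), -(Real.sqrt 3 / 2), 0], toEuc ![0, 0, 1], toEuc ![0, 0, -1]}) :
    IsUnitPosBasis D ∧ D.card = 5 ∧ MemOmega 5 D ∧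
      ∀ D' : Finset (Euc 3), IsUnitPosBasis D' → D'.card = 5 → MemOmega 5 D' →
        cm D' ≤ cm D := by
  classical
  have hDset : (↑D : Set (Euc 3)) = {V1,V2,V3,V4,V5} := by rw [hDdef]; rfl
  have hDfin : D = ({V1,V2,V3,V4,V5} : Finset (Euc 3)) := by
    apply Finset.coe_injective
    rw [hDset, Finset.coe_insert, Finset.coe_insert, Finset.coe_insert, Finset.coe_insert,
      Finset.coe_singleton]
  have hDunit : ∀ d ∈ D, ‖d‖ = 1 := fun d hd =>
    normD5 d (by rw [← hDset]; exact Finset.mem_coe.mpr hd)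
  have hmemD : ∀ d ∈ D, d ∈ ({V1,V2,V3,V4,V5} : Set (Euc 3)) := fun d hd => by
    rw [← hDset]; exact Finset.mem_coe.mpr hd
  have hmem3 : ∀ d ∈ ({V1,V2,V3} : Finset (Euc 3)), d ∈ ({V1,V2,V3,V4,V5} : Set (Euc 3)) := by
    intro d hd
    simp only [Finset.mem_insert, Finset.mem_singleton] at hd
    rcases hd with rfl|rfl|rfl <;> simp
  have hmem2 : ∀ d ∈ ({V4,V5} : Finset (Euc 3)), d ∈ ({V1,V2,V3,V4,V5} : Set (Euc 3)) := by
    intro d hd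
    simp only [Finset.mem_insert, Finset.mem_singleton] at hd
    rcases hd with rfl|rfl <;> simp
  have hcoe3 : (↑({V1,V2,V3} : Finset (Euc 3)) : Set (Euc 3)) = {V1,V2,V3} := by simp
  have hcoe2 : (↑({V4,V5} : Finset (Euc 3)) : Set (Euc 3)) = {V4,V5} := by simp
  have h01 : (0 : Fin 2) ≠ 1 := by decide
  refine ⟨⟨hDunit, ?_, ?_⟩, ?_, ?_, ?_⟩
  · -- positive independence
    exact posIndep_aux D hDunit fun d hd e he hne =>
      innerNP d (hmemD d hd) e (hmemD e he) hne
  · -- positive span is everything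
    rw [hDset]; exact pspan_D
  · -- cardinality
    rw [hDfin]
    rw [Finset.card_insert_of_notMem (by simp [ne12, ne13, ne14, ne15]),
      Finset.card_insert_of_notMem (by simp [ne23, ne24, ne25]),
      Finset.card_insert_of_notMem (by simp [ne34, ne35]),
      Finset.card_insert_of_notMem (by simp [ne45]), Finset.card_singleton]
  · -- membership in Omega
    refine ⟨![Submodule.span ℝ {V1,V2}, Submodule.span ℝ {V4}],
      ![({V1,V2,V3} : Finset (Euc 3)), ({V4,V5} : Finset (Euc 3))], ?_, ?_, ?_, ?_, ?_⟩
    · intro i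
      fin_cases i
      · show 1 ≤ Module.finrank ℝ (Submodule.span ℝ {V1,V2})
        rw [frL0]; norm_num
      · show 1 ≤ Module.finrank ℝ (Submodule.span ℝ {V4})
        rw [frL1]
    · intro i
      fin_cases i
      · show IsMinPosBasisOf (Submodule.span ℝ {V1,V2}) ({V1,V2,V3} : Finset (Euc 3))
        refine ⟨fun d hd => normD5 d (hmem3 d hd), ?_, ?_, ?_, ?_⟩
        · rw [hcoe3, ← pspan_P0]
          intro d hd
          exact ⟨{d}, fun _ => 1, by simpa using hd, fun _ _ => zero_le_one,
            by rw [Finset.sum_singleton, one_smul]⟩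
        · exact posIndep_aux _ (fun d hd => normD5 d (hmem3 d hd)) fun d hd e he hne =>
            innerNP d (hmem3 d hd) e (hmem3 e he) hne
        · rw [hcoe3]; exact pspan_P0
        · rw [frL0]
          rw [Finset.card_insert_of_notMem (by simp [ne12, ne13]),
            Finset.card_insert_of_notMem (by simp [ne23]), Finset.card_singleton]
      · show IsMinPosBasisOf (Submodule.span ℝ {V4}) ({V4,V5} : Finset (Euc 3))
        refine ⟨fun d hd => normD5 d (hmem2 d hd), ?_, ?_, ?_, ?_⟩
        · rw [hcoe2, ← pspan_P1]
          intro d hd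
          exact ⟨{d}, fun _ => 1, by simpa using hd, fun _ _ => zero_le_one,
            by rw [Finset.sum_singleton, one_smul]⟩
        · exact posIndep_aux _ (fun d hd => normD5 d (hmem2 d hd)) fun d hd e he hne =>
            innerNP d (hmem2 d hd) e (hmem2 e he) hne
        · rw [hcoe2]; exact pspan_P1
        · rw [frL1]
          rw [Finset.card_insert_of_notMem (by simp [ne45]), Finset.card_singleton]
    · intro i j hij
      fin_cases i <;> fin_cases j
      · exact absurd rfl hij
      · show Disjoint (↑({V1,V2,V3} : Finset (Euc 3)) : Set (Euc 3))
          (↑({V4,V5} : Finset (Euc 3)) : Set (Euc 3))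
        rw [hcoe3, hcoe2, Set.disjoint_left]
        intro x hx hx'
        simp only [Set.mem_insert_iff, Set.mem_singleton_iff] at hx hx'
        rcases hx with rfl|rfl|rfl <;> rcases hx' with h|h
        exacts [ne14 h, ne15 h, ne24 h, ne25 h, ne34 h, ne35 h]
      · show Disjoint (↑({V4,V5} : Finset (Euc 3)) : Set (Euc 3))
          (↑({V1,V2,V3} : Finset (Euc 3)) : Set (Euc 3))
        rw [hcoe3, hcoe2, Set.disjoint_right]
        intro x hx hx'
        simp only [Set.mem_insert_iff, Set.mem_singleton_iff] at hx hx'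
        rcases hx with rfl|rfl|rfl <;> rcases hx' with h|h
        exacts [ne14 h, ne15 h, ne24 h, ne25 h, ne34 h, ne35 h]
      · exact absurd rfl hij
    · rw [hDset]
      have hUeq : (⋃ i, (↑(![({V1,V2,V3} : Finset (Euc 3)), ({V4,V5} : Finset (Euc 3))] i) :
            Set (Euc 3)))
          = (↑({V1,V2,V3} : Finset (Euc 3)) : Set (Euc 3)) ∪
            (↑({V4,V5} : Finset (Euc 3)) : Set (Euc 3)) := by
        apply subset_antisymm
        · intro x hx
          obtain ⟨i, hi⟩ := Set.mem_iUnion.mp hx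
          fin_cases i
          · exact Or.inl hi
          · exact Or.inr hi
        · rintro x (h | h)
          · exact Set.mem_iUnion.mpr ⟨0, h⟩
          · exact Set.mem_iUnion.mpr ⟨1, h⟩
      rw [hUeq, hcoe3, hcoe2]
      ext x
      simp only [Set.mem_insert_iff, Set.mem_singleton_iff, Set.mem_union]
      tauto
    · rw [DirectSum.isInternal_submodule_iff_iSupIndep_and_iSup_eq_top]
      have hcover : ∀ k : Fin 2, k = 0 ∨ k = 1 := by decide
      constructor
      · rw [iSupIndep_pair h01 hcover]
        exact LdisjL
      · apply le_antisymm le_top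
        rw [← Lsup]
        exact sup_le
          (le_iSup (![Submodule.span ℝ {V1,V2}, Submodule.span ℝ {V4}] : Fin 2 → _) 0)
          (le_iSup (![Submodule.span ℝ {V1,V2}, Submodule.span ℝ {V4}] : Fin 2 → _) 1)
  · -- optimality
    intro D' hD'basis hD'card hD'omega
    obtain ⟨u, hu, hb⟩ := upper_u D' hD'card hD'omega
    have hne : D'.Nonempty := Finset.card_pos.mp (by rw [hD'card]; norm_num)
    have h1 : cm D' ≤ 1/Real.sqrt 5 := cm_le_of_u D' hne hD'basis.1 u hu hb
    have h2 : 1/Real.sqrt 5 ≤ cm D := cm_ge D hDset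
    linarith
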